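/- arXiv:2010.03906 — 3 statements merged into one kernel-verified Lean document; each statement's English description precedes it below -/
import Mathlib

section
/- Injectivity of projection: Let δ ∈ (0, 1/2) and let Σ ⊂ ℝ^n, p ∈ Σ, r > 0, and suppose η ∈ Σ ∩ B_r(p) satisfies: dist(η, p + F) ≤ δr and dist(ξ, p + F) ≤ δr for a fixed m-plane F, and for every ρ ∈ (0, r) there is an m-plane Q_ρ with ∠(Q_ρ, F) + δ < 1 such that every point of Σ ∩ B_ρ(η) lies within distance δρ of (η + Q_ρ) ∩ B_ρ(η). Then for every ξ ∈ Σ ∩ B_r(p) with ξ ≠ η satisfying dist(ξ, p+F) ≤ δr, one has Π_{p+F}(ξ) ≠ Π_{p+F}(η). -/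
open Metric Real Filter

noncomputable def pr {n : ℕ} (F : Submodule ℝ (EuclideanSpace ℝ (Fin n))) :
    EuclideanSpace ℝ (Fin n) →L[ℝ] EuclideanSpace ℝ (Fin n) :=
  F.subtypeL.comp (F.orthogonalProjectionOnto)

noncomputable def graphSet {n : ℕ} (F : Submodule ℝ (EuclideanSpace ℝ (Fin n)))
    (u : F → Fᗮ) : Set (EuclideanSpace ℝ (Fin n)) :=
  Set.range fun z : F => (z : EuclideanSpace ℝ (Fin n)) + (u z : EuclideanSpace ℝ (Fin n))

noncomputable def cone {n : ℕ} (x : EuclideanSpace ℝ (Fin n)) (β : ℝ)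
    (F : Submodule ℝ (EuclideanSpace ℝ (Fin n))) : Set (EuclideanSpace ℝ (Fin n)) :=
  {z | ‖pr Fᗮ (z - x)‖ ≤ β * ‖pr F (z - x)‖}

lemma pr_eq_zero_of_mem_orthogonal {n : ℕ} (K : Submodule ℝ (EuclideanSpace ℝ (Fin n)))
    {x : EuclideanSpace ℝ (Fin n)} (hx : x ∈ Kᗮ) : pr K x = 0 := by
  simp [pr, Submodule.orthogonalProjectionOnto_apply_of_mem_orthogonal hx]

lemma norm_pr_le {n : ℕ} (K : Submodule ℝ (EuclideanSpace ℝ (Fin n)))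
    (x : EuclideanSpace ℝ (Fin n)) : ‖pr K x‖ ≤ ‖x‖ := by
  have h1 := Submodule.orthogonalProjectionOnto_norm_le K
  have h2 := K.orthogonalProjectionOnto.le_opNorm x
  have h3 : ‖pr K x‖ = ‖K.orthogonalProjectionOnto x‖ := rfl
  rw [h3]
  calc ‖K.orthogonalProjectionOnto x‖ ≤ ‖K.orthogonalProjectionOnto‖ * ‖x‖ := h2
    _ ≤ 1 * ‖x‖ := by apply mul_le_mul_of_nonneg_right h1 (norm_nonneg _)
    _ = ‖x‖ := one_mul _

lemma norm_pr_orth_le_dist {n : ℕ} (K : Submodule ℝ (EuclideanSpace ℝ (Fin n)))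
    (x : EuclideanSpace ℝ (Fin n)) {v : EuclideanSpace ℝ (Fin n)} (hv : v ∈ K) :
    ‖pr Kᗮ x‖ ≤ ‖x - v‖ := by
  have h : pr Kᗮ (x - v) = pr Kᗮ x := by
    rw [map_sub, pr_eq_zero_of_mem_orthogonal Kᗮ (K.le_orthogonal_orthogonal hv), sub_zero]
  rw [← h]
  exact norm_pr_le _ _

lemma pr_pythagoras {n : ℕ} (K : Submodule ℝ (EuclideanSpace ℝ (Fin n)))
    (x : EuclideanSpace ℝ (Fin n)) : ‖x‖ ^ 2 = ‖pr K x‖ ^ 2 + ‖pr Kᗮ x‖ ^ 2 := by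
  have := Submodule.norm_sq_eq_add_norm_sq_projection x K
  simpa [pr] using this

set_option maxHeartbeats 1000000 in
/-- Injectivity of the projection onto an approximating plane: under
Reifenberg-type closeness hypotheses at `η` on all scales `ρ < r`, two distinct
points of `Σ ∩ B_r(p)` close to `p + F` have distinct projections to `p+F`. -/
theorem injective_projection {n m : ℕ} (δ : ℝ) (hδ : δ ∈ Set.Ioo (0 : ℝ) (1 / 2))
    (Sig : Set (EuclideanSpace ℝ (Fin n))) (p : EuclideanSpace ℝ (Fin n))
    (hp : p ∈ Sig) (r : ℝ) (hr : 0 < r)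
    (F : Submodule ℝ (EuclideanSpace ℝ (Fin n))) (hF : Module.finrank ℝ F = m)
    (η : EuclideanSpace ℝ (Fin n)) (hη : η ∈ Sig ∩ ball p r)
    (hηdist : Metric.infDist η ((fun v => p + v) '' (F : Set (EuclideanSpace ℝ (Fin n)))) ≤ δ * r)
    (hQ : ∀ ρ ∈ Set.Ioo (0 : ℝ) r, ∃ Q : Submodule ℝ (EuclideanSpace ℝ (Fin n)),
      Module.finrank ℝ Q = m ∧ ‖pr Q - pr F‖ + δ < 1 ∧
      ∀ z ∈ Sig ∩ ball η ρ,
        Metric.infDist z (((fun v => η + v) '' (Q : Set (EuclideanSpace ℝ (Fin n)))) ∩ ball η ρ)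
          ≤ δ * ρ)
    (ξ : EuclideanSpace ℝ (Fin n)) (hξ : ξ ∈ Sig ∩ ball p r) (hne : ξ ≠ η)
    (hξdist : Metric.infDist ξ ((fun v => p + v) '' (F : Set (EuclideanSpace ℝ (Fin n)))) ≤ δ * r) :
    p + pr F (ξ - p) ≠ p + pr F (η - p) := by
  obtain ⟨hδ0, hδhalf⟩ := hδ
  intro heq
  have heq' : pr F (ξ - p) = pr F (η - p) := add_left_cancel heq
  set x : EuclideanSpace ℝ (Fin n) := ξ - η with hxdef
  have hx0 : pr F x = 0 := by
    have : x = (ξ - p) - (η - p) := by simp only [hxdef]; abel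
    rw [this, map_sub, heq', sub_self]
  have hxF : x ∈ Fᗮ := by
    have : F.orthogonalProjectionOnto x = 0 := by
      have := congrArg (F.orthogonalProjectionOnto) hx0
      exact Subtype.ext (by simpa [pr] using hx0)
    exact Submodule.orthogonalProjectionOnto_eq_zero_iff.mp this
  set d : ℝ := ‖x‖ with hddef
  have hd0 : 0 < d := by
    simp only [hddef, norm_pos_iff]
    exact sub_ne_zero.mpr hne
  -- bound on d: d ≤ 2 δ r
  have hbound : ∀ z : EuclideanSpace ℝ (Fin n),
      Metric.infDist z ((fun v => p + v) '' (F : Set (EuclideanSpace ℝ (Fin n)))) ≤ δ * r →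
      ‖pr Fᗮ (z - p)‖ ≤ δ * r := by
    intro z hz
    by_contra hcon
    push_neg at hcon
    have hlt : Metric.infDist z ((fun v => p + v) '' (F : Set (EuclideanSpace ℝ (Fin n))))
        < ‖pr Fᗮ (z - p)‖ := lt_of_le_of_lt hz hcon
    have hne' : ((fun v => p + v) '' (F : Set (EuclideanSpace ℝ (Fin n)))).Nonempty :=
      ⟨p + 0, ⟨0, F.zero_mem, rfl⟩⟩
    obtain ⟨y, ⟨v, hv, rfl⟩, hy⟩ := (infDist_lt_iff hne').mp hlt
    have : ‖pr Fᗮ (z - p)‖ ≤ ‖(z - p) - v‖ := norm_pr_orth_le_dist F (z - p) hv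
    have hdist : dist z (p + v) = ‖(z - p) - v‖ := by
      rw [dist_eq_norm]; congr 1; abel
    rw [hdist] at hy
    linarith
  have hdle : d ≤ 2 * (δ * r) := by
    have h1 : ‖pr Fᗮ (ξ - p)‖ ≤ δ * r := hbound ξ hξdist
    have h2 : ‖pr Fᗮ (η - p)‖ ≤ δ * r := hbound η hηdist
    have hx' : pr Fᗮ x = x := by
      have : Fᗮ.orthogonalProjectionOnto x = ⟨x, hxF⟩ :=
        Submodule.orthogonalProjectionOnto_mem_subspace_eq_self (⟨x, hxF⟩ : Fᗮ)
      simp [pr, this]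
    have hsplit : x = (ξ - p) - (η - p) := by simp only [hxdef]; abel
    calc d = ‖pr Fᗮ x‖ := by rw [hx']
      _ = ‖pr Fᗮ (ξ - p) - pr Fᗮ (η - p)‖ := by rw [hsplit, map_sub]
      _ ≤ ‖pr Fᗮ (ξ - p)‖ + ‖pr Fᗮ (η - p)‖ := norm_sub_le _ _
      _ ≤ 2 * (δ * r) := by linarith
  have hdr : d < r := by nlinarith
  -- choose the scale ρ
  set ρ : ℝ := min (3 / 2 * d) ((d + r) / 2) with hρdef
  have hρ0 : 0 < ρ := lt_min (by linarith) (by linarith)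
  have hρr : ρ < r := lt_of_le_of_lt (min_le_right _ _) (by linarith)
  have hdρ : d < ρ := lt_min (by linarith) (by linarith)
  have hρle : ρ ≤ 3 / 2 * d := min_le_left _ _
  obtain ⟨Q, hQm, hα, hclose⟩ := hQ ρ ⟨hρ0, hρr⟩
  set α : ℝ := ‖pr Q - pr F‖ with hαdef
  have hα0 : 0 ≤ α := norm_nonneg _
  have hξball : ξ ∈ ball η ρ := by
    rw [mem_ball, dist_eq_norm]
    exact hdρ
  have hinf := hclose ξ ⟨hξ.1, hξball⟩
  -- the target set is nonempty (it contains η)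
  set S := ((fun v => η + v) '' (Q : Set (EuclideanSpace ℝ (Fin n)))) ∩ ball η ρ with hSdef
  have hSne : S.Nonempty := ⟨η, ⟨⟨0, Q.zero_mem, by simp⟩, mem_ball_self hρ0⟩⟩
  -- ‖pr Qᗮ x‖ ≤ δ ρ
  have hQorth : ‖pr Qᗮ x‖ ≤ δ * ρ := by
    by_contra hcon
    push_neg at hcon
    obtain ⟨y, hyS, hy⟩ := (infDist_lt_iff hSne).mp (lt_of_le_of_lt hinf hcon)
    obtain ⟨⟨q, hq, rfl⟩, _⟩ := hyS
    have h1 : ‖pr Qᗮ x‖ ≤ ‖x - q‖ := norm_pr_orth_le_dist Q x hq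
    have h2 : dist ξ (η + q) = ‖x - q‖ := by
      rw [dist_eq_norm]; congr 1; simp only [hxdef]; abel
    rw [h2] at hy
    linarith
  -- ‖pr Q x‖ ≤ α d
  have hQpart : ‖pr Q x‖ ≤ α * d := by
    have : pr Q x = (pr Q - pr F) x := by rw [ContinuousLinearMap.sub_apply, hx0, sub_zero]
    rw [this]
    exact (pr Q - pr F).le_opNorm x
  -- Pythagoras and contradiction
  have hpyth := pr_pythagoras Q x
  have hαlt : α < 1 - δ := by linarith
  have h1 : ‖pr Q x‖ ^ 2 ≤ (α * d) ^ 2 :=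
    pow_le_pow_left₀ (norm_nonneg _) hQpart 2
  have h2 : ‖pr Qᗮ x‖ ^ 2 ≤ (δ * ρ) ^ 2 :=
    pow_le_pow_left₀ (norm_nonneg _) hQorth 2
  have hρd2 : (δ * ρ) ^ 2 ≤ (δ * (3 / 2 * d)) ^ 2 := by
    apply pow_le_pow_left₀ (by positivity)
    exact mul_le_mul_of_nonneg_left hρle (le_of_lt hδ0)
  have hkey : d ^ 2 ≤ (α * d) ^ 2 + (δ * (3 / 2 * d)) ^ 2 := by
    rw [← hddef] at hpyth
    linarith
  have h3 : α ^ 2 < (1 - δ) ^ 2 := by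
    have := mul_self_lt_mul_self hα0 hαlt
    nlinarith
  have h4 : α ^ 2 * d ^ 2 < (1 - δ) ^ 2 * d ^ 2 :=
    mul_lt_mul_of_pos_right h3 (by positivity)
  nlinarith [mul_pos hd0 hd0, mul_pos (mul_pos hδ0 hd0) hd0, sq_nonneg (δ * d)]
end

section
/- Let F be an m-dimensional subspace of ℝ^n, u ∈ C²(F, F⊥), and let g(ξ) := ξ + u(ξ). For points p = g(x), q = g(y) with x, y ∈ F ∩ B_N(0), the orthogonal projection of p − q onto the orthogonal complement of the tangent plane T_q := {v + Du(y)v : v ∈ F} satisfies |Π_{T_q⊥}(p − q)| ≤ ‖D²u‖_{C⁰(F ∩ B_N(0))} · |p − q|². -/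
open Metric Real Filter

set_option synthInstance.maxHeartbeats 1000000
set_option maxHeartbeats 1000000

/-- For a `C²` function `u : F → F⊥` with second derivative bounded by `C` on
`F ∩ B_N(0)`, and graph points `p = x + u(x)`, `q = y + u(y)` with
`x, y ∈ F ∩ B_N(0)`, the projection of `p - q` onto the orthogonal complement
of the tangent plane at `q` is bounded by `C |p - q|²`. -/
theorem projection_tangent_complement_bound {n m : ℕ} (N : ℕ) (C : ℝ)
    (F : Submodule ℝ (EuclideanSpace ℝ (Fin n))) (hF : Module.finrank ℝ F = m)
    (u : F → Fᗮ) (hu : ContDiff ℝ 2 u)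
    (hC : ∀ z : F, ‖z‖ < (N : ℝ) → @Norm.norm _ (@ContinuousLinearMap.hasOpNorm ℝ ℝ F (F →L[ℝ] Fᗮ) _ _ _ _ _ _ (RingHom.id ℝ)) (fderiv ℝ (fderiv ℝ u) z) ≤ C)
    (x y : F) (hx : ‖x‖ < (N : ℝ)) (hy : ‖y‖ < (N : ℝ)) :
    ‖pr (LinearMap.range (F.subtype + Fᗮ.subtype ∘ₗ (fderiv ℝ u y).toLinearMap))ᗮ
        (((x : EuclideanSpace ℝ (Fin n)) + u x) - ((y : EuclideanSpace ℝ (Fin n)) + u y))‖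
      ≤ C * ‖((x : EuclideanSpace ℝ (Fin n)) + u x) - ((y : EuclideanSpace ℝ (Fin n)) + u y)‖ ^ 2 := by
  set T := LinearMap.range (F.subtype + Fᗮ.subtype ∘ₗ (fderiv ℝ u y).toLinearMap) with hT
  have hC0 : 0 ≤ C := le_trans (Real.sInf_nonneg (fun _ hc => hc.1)) (hC y hy)
  have hdiff1 : ContDiff ℝ 1 (fderiv ℝ u) := hu.fderiv_right (by norm_num)
  have hdiff : Differentiable ℝ u := hu.differentiable (by norm_num)
  -- Lipschitz bound on the derivative inside the ball
  have hlip : ∀ z ∈ Metric.ball (0:F) N, ‖fderiv ℝ u z - fderiv ℝ u y‖ ≤ C * ‖z - y‖ := by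
    intro z hz
    exact (convex_ball (0:F) N).norm_image_sub_le_of_norm_fderiv_le
      (fun w _ => (hdiff1.differentiable one_ne_zero w))
      (fun w hw => hC w (by simpa [mem_ball_zero_iff] using hw))
      (by simpa [mem_ball_zero_iff] using hy) hz
  -- Taylor remainder bound on the segment
  have hseg : segment ℝ y x ⊆ Metric.ball (0:F) N := by
    apply (convex_ball (0:F) N).segment_subset <;> simpa [mem_ball_zero_iff]
  have hrem : ‖(u x - u y) - (fderiv ℝ u y) (x - y)‖ ≤ C * ‖x - y‖ * ‖x - y‖ := by
    set h : F → Fᗮ := fun z => u z - (fderiv ℝ u y) z with hh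
    have hd : ∀ z, HasFDerivAt h (fderiv ℝ u z - fderiv ℝ u y) z := fun z =>
      ((hdiff z).hasFDerivAt).sub ((fderiv ℝ u y).hasFDerivAt)
    have key : ‖h x - h y‖ ≤ (C * ‖x - y‖) * ‖x - y‖ := by
      refine (convex_segment y x).norm_image_sub_le_of_norm_fderiv_le
        (fun w _ => (hd w).differentiableAt)
        (fun w hw => ?_) (left_mem_segment ℝ y x) (right_mem_segment ℝ y x)
      have h1 : ‖fderiv ℝ h w‖ = ‖fderiv ℝ u w - fderiv ℝ u y‖ := by
        rw [(hd w).fderiv]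
      rw [h1]
      refine (hlip w (hseg hw)).trans ?_
      have : ‖w - y‖ ≤ ‖x - y‖ := by
        obtain ⟨a, b, ha, hb, hab, rfl⟩ := hw
        have : a • y + b • x - y = b • (x - y) := by
          rw [show a = 1 - b by linarith]; module
        rw [this, norm_smul, Real.norm_of_nonneg hb]
        nlinarith [norm_nonneg (x - y)]
      nlinarith [norm_nonneg (x - y)]
    have : h x - h y = (u x - u y) - (fderiv ℝ u y) (x - y) := by
      simp [hh, map_sub]; abel
    rw [this] at key
    linarith [key]
  -- decompose p - q
  set a : EuclideanSpace ℝ (Fin n) := ((x - y : F) : EuclideanSpace ℝ (Fin n)) with ha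
  set b : EuclideanSpace ℝ (Fin n) := ((u x - u y : Fᗮ) : EuclideanSpace ℝ (Fin n)) with hb
  set d : EuclideanSpace ℝ (Fin n) := ((fderiv ℝ u y) (x - y) : EuclideanSpace ℝ (Fin n)) with hd
  have hpq : (((x : EuclideanSpace ℝ (Fin n)) + u x) - ((y : EuclideanSpace ℝ (Fin n)) + u y))
      = (a + d) + (b - d) := by
    simp only [ha, hb, hd, Submodule.coe_sub]
    abel
  have hwT : a + d ∈ T := ⟨x - y, rfl⟩
  have hprz : pr Tᗮ (a + d) = 0 := by
    have h0 : Tᗮ.orthogonalProjectionOnto (a + d) = 0 :=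
      Submodule.orthogonalProjectionOnto_apply_of_mem_orthogonal
        (Submodule.le_orthogonal_orthogonal T hwT)
    simp [pr, h0]
  have hnorm_le : ‖pr Tᗮ (a + d + (b - d))‖ ≤ ‖b - d‖ := by
    rw [map_add, hprz, zero_add]
    calc ‖pr Tᗮ (b - d)‖ = ‖Tᗮ.orthogonalProjectionOnto (b - d)‖ := rfl
      _ ≤ ‖Tᗮ.orthogonalProjectionOnto‖ * ‖b - d‖ := (Tᗮ.orthogonalProjectionOnto).le_opNorm _
      _ ≤ 1 * ‖b - d‖ := by
          have := Submodule.orthogonalProjectionOnto_norm_le Tᗮ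
          nlinarith [norm_nonneg (b - d)]
      _ = ‖b - d‖ := one_mul _
  have hbd : ‖b - d‖ ≤ C * ‖x - y‖ * ‖x - y‖ := by
    have : b - d = (((u x - u y) - (fderiv ℝ u y) (x - y) : Fᗮ) : EuclideanSpace ℝ (Fin n)) := by
      simp [hb, hd]
    rw [this]
    simpa using hrem
  -- ‖x - y‖ ≤ ‖p - q‖
  have hab_orth : inner ℝ a b = (0:ℝ) := by
    exact ((Submodule.mem_orthogonal F b).mp (u x - u y).2) a (x - y).2
  have hxy_le : ‖a‖ ≤ ‖a + b‖ := by
    have h1 : ‖a + b‖ ^ 2 = ‖a‖ ^ 2 + 2 * inner ℝ a b + ‖b‖ ^ 2 := norm_add_sq_real a b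
    rw [hab_orth] at h1
    nlinarith [norm_nonneg (a + b), norm_nonneg a, norm_nonneg b]
  have hpq2 : (((x : EuclideanSpace ℝ (Fin n)) + u x) - ((y : EuclideanSpace ℝ (Fin n)) + u y))
      = a + b := by
    simp only [ha, hb, Submodule.coe_sub]; abel
  have hxny : ‖x - y‖ ≤ ‖(((x : EuclideanSpace ℝ (Fin n)) + u x) - ((y : EuclideanSpace ℝ (Fin n)) + u y))‖ := by
    rw [hpq2]
    simpa [ha] using hxy_le
  calc ‖pr Tᗮ (((x : EuclideanSpace ℝ (Fin n)) + u x) - ((y : EuclideanSpace ℝ (Fin n)) + u y))‖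
      = ‖pr Tᗮ (a + d + (b - d))‖ := by rw [← hpq]
    _ ≤ ‖b - d‖ := hnorm_le
    _ ≤ C * ‖x - y‖ * ‖x - y‖ := hbd
    _ ≤ C * ‖(((x : EuclideanSpace ℝ (Fin n)) + u x) - ((y : EuclideanSpace ℝ (Fin n)) + u y))‖ ^ 2 := by
        rw [pow_two, mul_assoc]
        gcongr <;> exact hxny
end

section
/- Let F be an m-dimensional subspace of ℝ^n and u : F → F⊥ Lipschitz with Lip u ≤ β. Then for every x ∈ F and r > 0, the orthogonal projection Π_F of graph u ∩ B_r(x + u(x)) onto F contains the disk B_{r/√(1+β²)}(x) ∩ F; consequently the m-dimensional Hausdorff measure of graph u ∩ B_r(x+u(x)) is at least ω_m (r/√(1+β²))^m, where ω_m is the volume of the unit ball in ℝ^m. -/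
open Metric Real Filter

open MeasureTheory
open scoped RealInnerProductSpace Pointwise NNReal ENNReal

lemma pr_lip {n : ℕ} (F : Submodule ℝ (EuclideanSpace ℝ (Fin n))) :
    LipschitzWith 1 (pr F) := by
  apply LipschitzWith.of_dist_le_mul
  intro a b
  rw [dist_eq_norm, dist_eq_norm, ← map_sub]
  push_cast
  rw [one_mul]
  calc ‖pr F (a - b)‖ = ‖F.orthogonalProjectionOnto (a - b)‖ := by
        simp [pr]
    _ ≤ ‖F.orthogonalProjectionOnto‖ * ‖a - b‖ := (F.orthogonalProjectionOnto).le_opNorm _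
    _ ≤ 1 * ‖a - b‖ := by
        gcongr; exact Submodule.orthogonalProjectionOnto_norm_le F
    _ = ‖a - b‖ := one_mul _

lemma pr_mem {n : ℕ} (F : Submodule ℝ (EuclideanSpace ℝ (Fin n))) (z : F) :
    pr F (z : EuclideanSpace ℝ (Fin n)) = z := by
  simp [pr, Submodule.orthogonalProjectionOnto_mem_subspace_eq_self]

lemma pr_orth {n : ℕ} (F : Submodule ℝ (EuclideanSpace ℝ (Fin n))) (w : Fᗮ) :
    pr F (w : EuclideanSpace ℝ (Fin n)) = 0 := by
  simp [pr, Submodule.orthogonalProjectionOnto_apply_of_mem_orthogonal w.2]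

set_option maxHeartbeats 1000000 in
/-- The projection onto `F` of `graph u ∩ B_r(x+u(x))` contains the disk of
radius `r/√(1+β²)` around `x`, and the `m`-dimensional Hausdorff measure of
`graph u ∩ B_r(x+u(x))` is at least `ω_m (r/√(1+β²))^m`. -/
theorem graph_measure_lower_bound {n m : ℕ}
    (F : Submodule ℝ (EuclideanSpace ℝ (Fin n))) (hF : Module.finrank ℝ F = m)
    (β : ℝ) (hβ : 0 ≤ β)
    (u : F → Fᗮ) (hlip : ∀ a b : F, ‖u a - u b‖ ≤ β * ‖a - b‖)
    (x : F) (r : ℝ) (hr : 0 < r) :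
    (ball ((x : EuclideanSpace ℝ (Fin n))) (r / Real.sqrt (1 + β ^ 2)) ∩
        (F : Set (EuclideanSpace ℝ (Fin n))) ⊆
      pr F '' (graphSet F u ∩ ball ((x : EuclideanSpace ℝ (Fin n)) + u x) r)) ∧
    μH[(m : ℝ)] (ball (0 : EuclideanSpace ℝ (Fin m)) 1) *
        ENNReal.ofReal ((r / Real.sqrt (1 + β ^ 2)) ^ m) ≤
      μH[(m : ℝ)] (graphSet F u ∩ ball ((x : EuclideanSpace ℝ (Fin n)) + u x) r) := by
  have h1β : (0:ℝ) < 1 + β ^ 2 := by positivity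
  have hs : (0:ℝ) < Real.sqrt (1 + β ^ 2) := Real.sqrt_pos.2 h1β
  set ρ : ℝ := r / Real.sqrt (1 + β ^ 2) with hρdef
  have hρ : 0 < ρ := div_pos hr hs
  -- Part 1
  have part1 : ball ((x : EuclideanSpace ℝ (Fin n))) ρ ∩
      (F : Set (EuclideanSpace ℝ (Fin n))) ⊆
      pr F '' (graphSet F u ∩ ball ((x : EuclideanSpace ℝ (Fin n)) + u x) r) := by
    rintro y ⟨hy1, hy2⟩
    set z : F := ⟨y, hy2⟩ with hz
    refine ⟨(z : EuclideanSpace ℝ (Fin n)) + (u z : EuclideanSpace ℝ (Fin n)),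
      ⟨⟨z, rfl⟩, ?_⟩, ?_⟩
    · -- in the ball
      rw [mem_ball, dist_eq_norm]
      have horth : (inner ℝ ((z : EuclideanSpace ℝ (Fin n)) - (x : EuclideanSpace ℝ (Fin n)))
          ((u z : EuclideanSpace ℝ (Fin n)) - (u x : EuclideanSpace ℝ (Fin n))) : ℝ) = 0 := by
        have hmem : (z : EuclideanSpace ℝ (Fin n)) - (x : EuclideanSpace ℝ (Fin n)) ∈ F :=
          sub_mem z.2 x.2
        have hmem' : (u z : EuclideanSpace ℝ (Fin n)) - (u x : EuclideanSpace ℝ (Fin n)) ∈ Fᗮ :=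
          sub_mem (u z).2 (u x).2
        exact hmem' _ hmem
      have hrewrite : (z : EuclideanSpace ℝ (Fin n)) + (u z : EuclideanSpace ℝ (Fin n)) -
          ((x : EuclideanSpace ℝ (Fin n)) + (u x : EuclideanSpace ℝ (Fin n))) =
          ((z : EuclideanSpace ℝ (Fin n)) - (x : EuclideanSpace ℝ (Fin n))) +
          ((u z : EuclideanSpace ℝ (Fin n)) - (u x : EuclideanSpace ℝ (Fin n))) := by
        abel
      rw [hrewrite]
      have hzx : ‖(z : EuclideanSpace ℝ (Fin n)) - (x : EuclideanSpace ℝ (Fin n))‖ < ρ := by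
        simpa [dist_eq_norm] using hy1
      have hnormzx : (0:ℝ) ≤ ‖(z : EuclideanSpace ℝ (Fin n)) - (x : EuclideanSpace ℝ (Fin n))‖ :=
        norm_nonneg _
      have hsq : ‖((z : EuclideanSpace ℝ (Fin n)) - (x : EuclideanSpace ℝ (Fin n))) +
          ((u z : EuclideanSpace ℝ (Fin n)) - (u x : EuclideanSpace ℝ (Fin n)))‖ ^ 2 =
          ‖(z : EuclideanSpace ℝ (Fin n)) - (x : EuclideanSpace ℝ (Fin n))‖ ^ 2 +
          ‖(u z : EuclideanSpace ℝ (Fin n)) - (u x : EuclideanSpace ℝ (Fin n))‖ ^ 2 := by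
        rw [norm_add_sq_real, horth]; ring
      have huzx : ‖(u z : EuclideanSpace ℝ (Fin n)) - (u x : EuclideanSpace ℝ (Fin n))‖ ≤
          β * ‖(z : EuclideanSpace ℝ (Fin n)) - (x : EuclideanSpace ℝ (Fin n))‖ := by
        rw [← Submodule.coe_sub, ← Submodule.coe_sub, ← Submodule.coe_norm,
          ← Submodule.coe_norm]
        exact hlip z x
      have hbound : ‖((z : EuclideanSpace ℝ (Fin n)) - (x : EuclideanSpace ℝ (Fin n))) +
          ((u z : EuclideanSpace ℝ (Fin n)) - (u x : EuclideanSpace ℝ (Fin n)))‖ ^ 2 ≤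
          (1 + β ^ 2) * ‖(z : EuclideanSpace ℝ (Fin n)) - (x : EuclideanSpace ℝ (Fin n))‖ ^ 2 := by
        rw [hsq]
        have : ‖(u z : EuclideanSpace ℝ (Fin n)) - (u x : EuclideanSpace ℝ (Fin n))‖ ^ 2 ≤
            (β * ‖(z : EuclideanSpace ℝ (Fin n)) - (x : EuclideanSpace ℝ (Fin n))‖) ^ 2 := by
          have h0 : (0:ℝ) ≤ β * ‖(z : EuclideanSpace ℝ (Fin n)) - (x : EuclideanSpace ℝ (Fin n))‖ := by positivity
          nlinarith [norm_nonneg ((u z : EuclideanSpace ℝ (Fin n)) - (u x : EuclideanSpace ℝ (Fin n)))]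
        nlinarith
      have hlt : (1 + β ^ 2) * ‖(z : EuclideanSpace ℝ (Fin n)) -
          (x : EuclideanSpace ℝ (Fin n))‖ ^ 2 < r ^ 2 := by
        have hρr : Real.sqrt (1 + β ^ 2) * ρ = r := by
          rw [hρdef]; field_simp
        calc (1 + β ^ 2) * ‖(z : EuclideanSpace ℝ (Fin n)) -
            (x : EuclideanSpace ℝ (Fin n))‖ ^ 2 < (1 + β ^ 2) * ρ ^ 2 := by
              have : ‖(z : EuclideanSpace ℝ (Fin n)) - (x : EuclideanSpace ℝ (Fin n))‖ ^ 2 < ρ ^ 2 := by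
                nlinarith
              nlinarith
          _ = (Real.sqrt (1 + β ^ 2) * ρ) ^ 2 := by
              rw [mul_pow, Real.sq_sqrt h1β.le]
          _ = r ^ 2 := by rw [hρr]
      have := lt_of_le_of_lt hbound hlt
      nlinarith [norm_nonneg (((z : EuclideanSpace ℝ (Fin n)) -
        (x : EuclideanSpace ℝ (Fin n))) +
        ((u z : EuclideanSpace ℝ (Fin n)) - (u x : EuclideanSpace ℝ (Fin n))))]
    · rw [map_add, pr_mem, pr_orth, add_zero]
  refine ⟨part1, ?_⟩
  -- Part 2
  -- isometric embedding of ℝ^m onto the disk in F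
  have hm : (0:ℝ) ≤ (m:ℝ) := Nat.cast_nonneg m
  let b : OrthonormalBasis (Fin m) ℝ F := (stdOrthonormalBasis ℝ F).reindex (finCongr hF)
  let e : EuclideanSpace ℝ (Fin m) ≃ₗᵢ[ℝ] F := b.repr.symm
  let f : EuclideanSpace ℝ (Fin m) → EuclideanSpace ℝ (Fin n) :=
    fun v => (x : EuclideanSpace ℝ (Fin n)) + (e v : EuclideanSpace ℝ (Fin n))
  have hfiso : Isometry f := by
    apply Isometry.of_dist_eq
    intro v w
    simp only [f, dist_eq_norm, add_sub_add_left_eq_sub]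
    rw [← Submodule.coe_sub, ← Submodule.coe_norm, ← map_sub, e.norm_map]
  have himg : f '' ball 0 ρ = ball ((x : EuclideanSpace ℝ (Fin n))) ρ ∩
      (F : Set (EuclideanSpace ℝ (Fin n))) := by
    ext y
    constructor
    · rintro ⟨v, hv, rfl⟩
      constructor
      · rw [mem_ball, dist_eq_norm, add_sub_cancel_left, ← Submodule.coe_norm, e.norm_map]
        simpa [dist_eq_norm] using hv
      · exact add_mem x.2 (e v).2
    · rintro ⟨hy1, hy2⟩
      have hmem : y - (x : EuclideanSpace ℝ (Fin n)) ∈ F := sub_mem hy2 x.2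
      refine ⟨e.symm ⟨y - (x : EuclideanSpace ℝ (Fin n)), hmem⟩, ?_, ?_⟩
      · rw [mem_ball, dist_eq_norm, sub_zero, e.symm.norm_map, Submodule.coe_norm]
        simpa [dist_eq_norm] using hy1
      · simp [f]
  -- measure of the disk
  have hmeas_disk : μH[(m : ℝ)] (ball ((x : EuclideanSpace ℝ (Fin n))) ρ ∩
      (F : Set (EuclideanSpace ℝ (Fin n)))) =
      μH[(m : ℝ)] (ball (0 : EuclideanSpace ℝ (Fin m)) ρ) := by
    rw [← himg, hfiso.hausdorffMeasure_image (Or.inl hm)]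
  have hscale : μH[(m : ℝ)] (ball (0 : EuclideanSpace ℝ (Fin m)) ρ) =
      μH[(m : ℝ)] (ball (0 : EuclideanSpace ℝ (Fin m)) 1) * ENNReal.ofReal (ρ ^ m) := by
    have hball : ρ • ball (0 : EuclideanSpace ℝ (Fin m)) 1 =
        ball (0 : EuclideanSpace ℝ (Fin m)) ρ := by
      rw [smul_unitBall hρ.ne', Real.norm_of_nonneg hρ.le]
    rw [← hball, Measure.hausdorffMeasure_smul₀ hm hρ.ne']
    have h1 : (‖ρ‖₊ : ℝ≥0) ^ ((m : ℝ)) = ‖ρ‖₊ ^ m := NNReal.rpow_natCast _ m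
    rw [ENNReal.smul_def, mul_comm, h1, ← nnnorm_pow,
      ← enorm_eq_nnnorm, Real.enorm_eq_ofReal (by positivity), smul_eq_mul, mul_comm]
  -- Lipschitz projection bound
  have hle : μH[(m : ℝ)] (pr F '' (graphSet F u ∩
      ball ((x : EuclideanSpace ℝ (Fin n)) + u x) r)) ≤
      μH[(m : ℝ)] (graphSet F u ∩ ball ((x : EuclideanSpace ℝ (Fin n)) + u x) r) := by
    have := (pr_lip F).hausdorffMeasure_image_le hm
      (graphSet F u ∩ ball ((x : EuclideanSpace ℝ (Fin n)) + u x) r)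
    simpa using this
  calc μH[(m : ℝ)] (ball (0 : EuclideanSpace ℝ (Fin m)) 1) * ENNReal.ofReal (ρ ^ m)
      = μH[(m : ℝ)] (ball (0 : EuclideanSpace ℝ (Fin m)) ρ) := hscale.symm
    _ = μH[(m : ℝ)] (ball ((x : EuclideanSpace ℝ (Fin n))) ρ ∩
        (F : Set (EuclideanSpace ℝ (Fin n)))) := hmeas_disk.symm
    _ ≤ μH[(m : ℝ)] (pr F '' (graphSet F u ∩
        ball ((x : EuclideanSpace ℝ (Fin n)) + u x) r)) := measure_mono part1
    _ ≤ _ := hle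
end
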